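/- With μ and μ* as above: (1) μ* : h_M → h_L is a natural transformation having a b-index; (2) μ = (μ*)⁻¹ as maps S(h_L) → S(h_M); and (3) for any natural transformation f : h_M → h_L with a b-index, f = (f⁻¹)*. Hence the assignment h_L ↦ S(h_L), f ↦ f⁻¹ is a full and faithful, essentially surjective functor from the category of evaluation presheaves with b-indexed natural transformations to the opposite of the category of Heyting algebras freely generated by finite distributive lattices, i.e., an equivalence (duality) of categories. -/

import Mathlib

/-- A finite rooted poset: a finite partial order with a greatest element (the root). -/
structure FRP : Type 1 where
  carrier : Type
  [po : PartialOrder carrier]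
  [fin : Finite carrier]
  root : carrier
  le_root : ∀ x : carrier, x ≤ root

attribute [instance] FRP.po FRP.fin

/-- The downset of a point, as a finite rooted poset. -/
def FRP.down (P : FRP) (p : P.carrier) : FRP where
  carrier := {x : P.carrier // x ≤ p}
  root := ⟨p, le_refl p⟩
  le_root := fun x => x.2

/-- An `L`-evaluation: a monotone map from a finite rooted poset into `L`. -/
structure Eval (L : Type) [PartialOrder L] : Type 1 where
  P : FRP
  map : P.carrier → L
  mono : Monotone map

variable {L : Type} [PartialOrder L]

/-- Restriction of an evaluation to the downset of a point. -/
def Eval.restrict (u : Eval L) (p : u.P.carrier) : Eval L where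
  P := u.P.down p
  map := fun x => u.map x.1
  mono := fun _ _ h => u.mono h

/-- The value of an evaluation at the root of its domain. -/
def Eval.rootVal (u : Eval L) : L := u.map u.P.root

/-- The relations `∼ₙ` on `L`-evaluations. -/
def sim (L : Type) [PartialOrder L] : ℕ → Eval L → Eval L → Prop
  | 0 => fun u v => u.rootVal = v.rootVal
  | n+1 => fun u v =>
      (∀ p, ∃ q, sim L n (u.restrict p) (v.restrict q)) ∧
      (∀ q, ∃ p, sim L n (v.restrict q) (u.restrict p))

/-- The relations `≤ₙ`: `lev L n v u` means `v ≤ₙ u`. -/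
def lev (L : Type) [PartialOrder L] : ℕ → Eval L → Eval L → Prop
  | 0 => fun v u => v.rootVal ≤ u.rootVal
  | n+1 => fun v u => ∀ q, ∃ p, sim L n (v.restrict q) (u.restrict p)

/-- `S` is a subpresheaf of `h_L`: closed under restriction. -/
def IsSub (L : Type) [PartialOrder L] (S : Set (Eval L)) : Prop :=
  ∀ u ∈ S, ∀ p, u.restrict p ∈ S

/-- `S` has b-index `n`: closed under `∼ₙ`. -/
def BIndex (L : Type) [PartialOrder L] (n : ℕ) (S : Set (Eval L)) : Prop :=
  ∀ u ∈ S, ∀ v, sim L n u v → v ∈ S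

/-- `S` has b≤-index `n`: closed under being `≤ₙ`-below a member. -/
def BleIndex (L : Type) [PartialOrder L] (n : ℕ) (S : Set (Eval L)) : Prop :=
  ∀ u ∈ S, ∀ v, lev L n v u → v ∈ S

/-- `↓ₙ u`. -/
def downSet (L : Type) [PartialOrder L] (n : ℕ) (u : Eval L) : Set (Eval L) :=
  {v | lev L n v u}

/-- Pointwise description of Heyting implication of subpresheaves. -/
def himpPt (L : Type) [PartialOrder L] (S T : Set (Eval L)) : Set (Eval L) :=
  {u | ∀ p, u.restrict p ∈ S → u.restrict p ∈ T}

/-- The embedding of downward closed subsets of `L` into subpresheaves. -/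
def iota (L : Type) [PartialOrder L] (d : Set L) : Set (Eval L) :=
  {u | u.rootVal ∈ d}

/-- Membership in the Heyting algebra `S(h_L)`: subpresheaves with a b-index. -/
def InS (L : Type) [PartialOrder L] (S : Set (Eval L)) : Prop :=
  IsSub L S ∧ ∃ n, BIndex L n S

/-- `ev_f`. -/
def evalMap (L : Type) [PartialOrder L] (f : Eval L) (X : Set (Eval L)) : Set f.P.carrier :=
  {p | f.restrict p ∈ X}

/-- Heyting implication of downward closed subsets of a poset. -/
def himpD {M : Type} [PartialOrder M] (a b : Set M) : Set M :=
  {p | ∀ q ≤ p, q ∈ a → q ∈ b}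

/-! ### Auxiliary development for the duality theorem -/

section AuxDev

variable {L : Type} [PartialOrder L] {M : Type} [PartialOrder M]

lemma sim_succ_iff {n : ℕ} {u v : Eval L} :
    sim L (n+1) u v ↔
      ((∀ p, ∃ q, sim L n (u.restrict p) (v.restrict q)) ∧
       (∀ q, ∃ p, sim L n (v.restrict q) (u.restrict p))) := Iff.rfl

lemma cast_roundtrip {α β : Sort _} (e : α = β) (a : α) : cast e.symm (cast e a) = a := by
  subst e; rfl

lemma cast_root {P Q : FRP} (h : P = Q) :
    cast (congrArg FRP.carrier h).symm Q.root = P.root := by subst h; rfl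

lemma two_val {a b : L} (h : ∀ d : Set L, IsLowerSet d → (a ∈ d ↔ b ∈ d)) : a = b := by
  have h1 : a ≤ b := (h {x | x ≤ b} (fun _ _ hxy hx => le_trans hxy hx)).2 le_rfl
  have h2 : b ≤ a := (h {x | x ≤ a} (fun _ _ hxy hx => le_trans hxy hx)).1 le_rfl
  exact le_antisymm h1 h2

/-- The iterated `Set` hierarchy where the `n`-bisimulation invariants live. -/
def Tn (L : Type) : ℕ → Type
  | 0 => L
  | n+1 => Set (Tn L n)

instance TnFinite (L : Type) [Finite L] : ∀ n, Finite (Tn L n)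
  | 0 => inferInstanceAs (Finite L)
  | n+1 => by
      haveI := TnFinite L n
      exact inferInstanceAs (Finite (Set (Tn L n)))

/-- The `n`-bisimulation invariant of an evaluation. -/
def BInv (L : Type) [PartialOrder L] : (n : ℕ) → Eval L → Tn L n
  | 0, u => u.rootVal
  | n+1, u => (Set.range fun p => BInv L n (u.restrict p) : Set (Tn L n))

/-- The `n+1`-st invariant, typed as a set. -/
def BInvSet (L : Type) [PartialOrder L] (n : ℕ) (u : Eval L) : Set (Tn L n) :=
  Set.range fun p => BInv L n (u.restrict p)

lemma BInvSet_eq {n : ℕ} {u v : Eval L} (h : BInv L (n+1) u = BInv L (n+1) v) :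
    BInvSet L n u = BInvSet L n v := h

lemma BInvSet_eq' {n : ℕ} {u v : Eval L} (h : BInvSet L n u = BInvSet L n v) :
    BInv L (n+1) u = BInv L (n+1) v := h

/-- Invariance of `BInv` under isomorphism of evaluations. -/
lemma BInv_eq_of_iso :
    ∀ (n : ℕ) (u v : Eval L) (e : u.P.carrier → v.P.carrier) (e' : v.P.carrier → u.P.carrier),
      (∀ x, e' (e x) = x) → (∀ y, e (e' y) = y) →
      (∀ x y, x ≤ y → e x ≤ e y) → (∀ x y, x ≤ y → e' x ≤ e' y) →
      (∀ x, v.map (e x) = u.map x) →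
      BInv L n u = BInv L n v
  | 0, u, v, e, e', h1, h2, hm, hm', hmap => by
      have htop : e u.P.root = v.P.root := by
        refine le_antisymm (v.P.le_root _) ?_
        have h3 := hm (e' v.P.root) u.P.root (u.P.le_root _)
        rwa [h2] at h3
      show u.rootVal = v.rootVal
      calc u.rootVal = v.map (e u.P.root) := (hmap _).symm
        _ = v.rootVal := by rw [htop]; rfl
  | n+1, u, v, e, e', h1, h2, hm, hm', hmap => by
      have key : ∀ p : u.P.carrier,
          BInv L n (u.restrict p) = BInv L n (v.restrict (e p)) := by
        intro p
        refine BInv_eq_of_iso n (u.restrict p) (v.restrict (e p))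
          (fun x => ⟨e x.1, hm _ _ x.2⟩)
          (fun y => ⟨e' y.1, by
            have h3 := hm' y.1 (e p) y.2
            rwa [h1] at h3⟩)
          (fun x => Subtype.ext (h1 x.1))
          (fun y => Subtype.ext (h2 y.1))
          (fun x y hxy => hm _ _ hxy)
          (fun x y hxy => hm' _ _ hxy)
          (fun x => hmap x.1)
      show BInvSet L n u = BInvSet L n v
      apply Set.Subset.antisymm
      · rintro t ⟨p, rfl⟩
        exact ⟨e p, (key p).symm⟩
      · rintro t ⟨q, rfl⟩
        refine ⟨e' q, ?_⟩
        show BInv L n (u.restrict (e' q)) = BInv L n (v.restrict q)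
        rw [key (e' q), h2]

lemma BInv_restrict_root (n : ℕ) (u : Eval L) :
    BInv L n (u.restrict u.P.root) = BInv L n u :=
  BInv_eq_of_iso n _ u (fun x => x.1) (fun y => ⟨y, u.P.le_root y⟩)
    (fun x => Subtype.ext rfl) (fun _ => rfl)
    (fun _ _ h => h) (fun _ _ h => h) (fun _ => rfl)

lemma BInv_restrict_restrict (n : ℕ) (u : Eval L) (p : u.P.carrier)
    (q : (u.restrict p).P.carrier) :
    BInv L n ((u.restrict p).restrict q) = BInv L n (u.restrict q.1) :=
  BInv_eq_of_iso n _ _ (fun x => ⟨x.1.1, x.2⟩)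
    (fun z => ⟨⟨z.1, le_trans z.2 q.2⟩, z.2⟩)
    (fun x => Subtype.ext (Subtype.ext rfl))
    (fun z => Subtype.ext rfl)
    (fun _ _ h => h) (fun _ _ h => h) (fun _ => rfl)

lemma self_mem_BInvSet (n : ℕ) (u : Eval L) : BInv L n u ∈ BInvSet L n u :=
  ⟨u.P.root, by
    show BInv L n (u.restrict u.P.root) = BInv L n u
    exact BInv_restrict_root n u⟩

lemma BInv_pred : ∀ (n : ℕ) (u v : Eval L),
    BInv L (n+1) u = BInv L (n+1) v → BInv L n u = BInv L n v
  | 0, u, v, h => by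
      have h1 : BInv L 0 u ∈ BInvSet L 0 v := by
        rw [← BInvSet_eq h]
        exact self_mem_BInvSet 0 u
      have h2 : BInv L 0 v ∈ BInvSet L 0 u := by
        rw [BInvSet_eq h]
        exact self_mem_BInvSet 0 v
      obtain ⟨q, hq⟩ := h1
      obtain ⟨p, hp⟩ := h2
      have hq' : v.map q = u.rootVal := hq
      have hp' : u.map p = v.rootVal := hp
      show u.rootVal = v.rootVal
      refine le_antisymm ?_ ?_
      · rw [← hq']; exact v.mono (v.P.le_root q)
      · rw [← hp']; exact u.mono (u.P.le_root p)
  | n+1, u, v, h => by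
      show BInvSet L n u = BInvSet L n v
      apply Set.Subset.antisymm
      · rintro t ⟨p, rfl⟩
        have h1 : BInv L (n+1) (u.restrict p) ∈ BInvSet L (n+1) v := by
          rw [← BInvSet_eq h]
          exact ⟨p, rfl⟩
        obtain ⟨q, hq⟩ := h1
        have hq' : BInv L (n+1) (v.restrict q) = BInv L (n+1) (u.restrict p) := hq
        exact ⟨q, BInv_pred n _ _ hq'⟩
      · rintro t ⟨q, rfl⟩
        have h1 : BInv L (n+1) (v.restrict q) ∈ BInvSet L (n+1) u := by
          rw [BInvSet_eq h]
          exact ⟨q, rfl⟩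
        obtain ⟨p, hp⟩ := h1
        have hp' : BInv L (n+1) (u.restrict p) = BInv L (n+1) (v.restrict q) := hp
        exact ⟨p, BInv_pred n _ _ hp'⟩

lemma sim_iff : ∀ (n : ℕ) (u v : Eval L), sim L n u v ↔ BInv L n u = BInv L n v
  | 0, u, v => Iff.rfl
  | n+1, u, v => by
      rw [sim_succ_iff]
      constructor
      · rintro ⟨hs1, hs2⟩
        show BInvSet L n u = BInvSet L n v
        apply Set.Subset.antisymm
        · rintro t ⟨p, rfl⟩
          obtain ⟨q, hq⟩ := hs1 p
          exact ⟨q, ((sim_iff n _ _).1 hq).symm⟩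
        · rintro t ⟨q, rfl⟩
          obtain ⟨p, hp⟩ := hs2 q
          exact ⟨p, ((sim_iff n _ _).1 hp).symm⟩
      · intro h
        constructor
        · intro p
          have h1 : BInv L n (u.restrict p) ∈ BInvSet L n v := by
            rw [← BInvSet_eq h]
            exact ⟨p, rfl⟩
          obtain ⟨q, hq⟩ := h1
          have hq' : BInv L n (v.restrict q) = BInv L n (u.restrict p) := hq
          exact ⟨q, (sim_iff n _ _).2 hq'.symm⟩
        · intro q
          have h1 : BInv L n (v.restrict q) ∈ BInvSet L n u := by
            rw [BInvSet_eq h]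
            exact ⟨q, rfl⟩
          obtain ⟨p, hp⟩ := h1
          have hp' : BInv L n (u.restrict p) = BInv L n (v.restrict q) := hp
          exact ⟨p, (sim_iff n _ _).2 hp'.symm⟩

lemma BInv_add_eq : ∀ (k n : ℕ) (u v : Eval L),
    BInv L (n+k) u = BInv L (n+k) v → BInv L n u = BInv L n v
  | 0, _, _, _, h => h
  | k+1, n, u, v, h => BInv_add_eq k n u v (BInv_pred (n+k) u v h)

lemma sim_of_le {n k : ℕ} (h : n ≤ k) {u v : Eval L} (hs : sim L k u v) : sim L n u v := by
  obtain ⟨j, rfl⟩ := Nat.exists_eq_add_of_le h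
  exact (sim_iff n u v).2 (BInv_add_eq j n u v ((sim_iff _ u v).1 hs))

lemma BIndex_mono {n k : ℕ} (h : n ≤ k) {S : Set (Eval L)} (hb : BIndex L n S) :
    BIndex L k S := fun u hu v hv => hb u hu v (sim_of_le h hv)

lemma InS_univ : InS L Set.univ := ⟨fun _ _ _ => trivial, 0, fun _ _ _ _ => trivial⟩

lemma InS_empty : InS L ∅ := ⟨fun _ hu _ => hu.elim, 0, fun _ hu _ _ => hu.elim⟩

lemma InS_inter {S T : Set (Eval L)} (hS : InS L S) (hT : InS L T) : InS L (S ∩ T) := by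
  obtain ⟨hS1, nS, hS2⟩ := hS
  obtain ⟨hT1, nT, hT2⟩ := hT
  refine ⟨fun u hu p => ⟨hS1 u hu.1 p, hT1 u hu.2 p⟩, max nS nT, fun u hu v hv =>
    ⟨BIndex_mono (le_max_left _ _) hS2 u hu.1 v hv,
     BIndex_mono (le_max_right _ _) hT2 u hu.2 v hv⟩⟩

lemma InS_union {S T : Set (Eval L)} (hS : InS L S) (hT : InS L T) : InS L (S ∪ T) := by
  obtain ⟨hS1, nS, hS2⟩ := hS
  obtain ⟨hT1, nT, hT2⟩ := hT
  refine ⟨fun u hu p => hu.elim (fun h => Or.inl (hS1 u h p)) (fun h => Or.inr (hT1 u h p)),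
    max nS nT, fun u hu v hv => hu.elim
      (fun h => Or.inl (BIndex_mono (le_max_left _ _) hS2 u h v hv))
      (fun h => Or.inr (BIndex_mono (le_max_right _ _) hT2 u h v hv))⟩

lemma InS_iota (d : Set L) (hd : IsLowerSet d) : InS L (iota L d) :=
  ⟨fun u hu p => hd (u.mono (u.P.le_root p)) hu, 0,
   fun u hu v hv => by
      have h : u.rootVal = v.rootVal := hv
      show v.rootVal ∈ d
      rw [← h]
      exact hu⟩

/-- The sets `↓_{n+1} s`, with set-typed index. -/
def DsetS (L : Type) [PartialOrder L] (n : ℕ) (s : Set (Tn L n)) : Set (Eval L) :=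
  {v | ∀ q, BInv L n (v.restrict q) ∈ s}

/-- The subpresheaf `↓ₙ t` of evaluations `≤ₙ`-below the class `t`. -/
def Dset (L : Type) [PartialOrder L] : (n : ℕ) → Tn L n → Set (Eval L)
  | 0, a => {v | v.rootVal ≤ a}
  | n+1, s => DsetS L n s

/-- The subpresheaf of evaluations having no restriction in the class `t`. -/
def Eset (L : Type) [PartialOrder L] (n : ℕ) (t : Tn L n) : Set (Eval L) :=
  {v | ∀ q, BInv L n (v.restrict q) ≠ t}

lemma InS_Dset (n : ℕ) (t : Tn L n) : InS L (Dset L n t) := by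
  cases n with
  | zero =>
      refine ⟨fun u hu p => le_trans (u.mono (u.P.le_root p)) hu, 0, ?_⟩
      intro u hu v hv
      have h : u.rootVal = v.rootVal := hv
      show v.rootVal ≤ t
      rw [← h]
      exact hu
  | succ n =>
      constructor
      · intro u hu p q
        have h0 : BInv L n ((u.restrict p).restrict q) = BInv L n (u.restrict q.1) :=
          BInv_restrict_restrict n u p q
        have h5 := hu q.1
        rw [← h0] at h5
        exact h5
      · refine ⟨n+1, ?_⟩
        intro u hu v hsim q
        have h : BInvSet L n u = BInvSet L n v := BInvSet_eq ((sim_iff (n+1) u v).1 hsim)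
        have h4 : BInv L n (v.restrict q) ∈ BInvSet L n u := by
          rw [h]
          exact ⟨q, rfl⟩
        obtain ⟨p, hp⟩ := h4
        have hp' : BInv L n (u.restrict p) = BInv L n (v.restrict q) := hp
        have h5 := hu p
        rw [hp'] at h5
        exact h5

lemma InS_Eset (n : ℕ) (t : Tn L n) : InS L (Eset L n t) := by
  constructor
  · intro u hu p q
    have h0 : BInv L n ((u.restrict p).restrict q) = BInv L n (u.restrict q.1) :=
      BInv_restrict_restrict n u p q
    have h5 := hu q.1
    rw [← h0] at h5
    exact h5
  · refine ⟨n+1, ?_⟩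
    intro u hu v hsim q he
    have h : BInvSet L n u = BInvSet L n v := BInvSet_eq ((sim_iff (n+1) u v).1 hsim)
    have h4 : BInv L n (v.restrict q) ∈ BInvSet L n u := by
      rw [h]
      exact ⟨q, rfl⟩
    obtain ⟨p, hp⟩ := h4
    have hp' : BInv L n (u.restrict p) = BInv L n (v.restrict q) := hp
    exact hu p (hp'.trans he)

lemma Dset_zero (a : L) : Dset L 0 a = iota L {x | x ≤ a} := rfl

lemma Eset_zero (a : L) :
    Eset L 0 a = himpPt L (iota L {x | x ≤ a}) (iota L {x | x < a}) := by
  ext v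
  constructor
  · intro h p hp
    have h1 : (v.restrict p).rootVal ≤ a := hp
    have h2 : (v.restrict p).rootVal ≠ a := h p
    exact lt_of_le_of_ne h1 h2
  · intro h q hq
    have hq' : (v.restrict q).rootVal = a := hq
    have h2 : (v.restrict q).rootVal < a := h q (le_of_eq hq')
    exact absurd hq' (ne_of_lt h2)

lemma Dset_succ [Finite L] (n : ℕ) (s : Set (Tn L n)) :
    Dset L (n+1) s = ⋂ t ∈ (Set.toFinite sᶜ).toFinset, Eset L n t := by
  ext v
  simp only [Set.mem_iInter, Set.Finite.mem_toFinset, Set.mem_compl_iff]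
  constructor
  · intro hv t ht q he
    exact ht (he ▸ hv q)
  · intro h q
    by_contra hq
    exact h _ hq q rfl

lemma Eset_succ [Finite L] (n : ℕ) (s : Set (Tn L n)) :
    Eset L (n+1) s = himpPt L (Dset L (n+1) s)
      (⋃ t ∈ (Set.toFinite s).toFinset, Eset L n t) := by
  ext v
  constructor
  · intro h p hp
    have hsub : BInvSet L n (v.restrict p) ⊆ s := by
      rintro x ⟨q, rfl⟩
      exact hp q
    have hex : ∃ t ∈ s, t ∉ BInvSet L n (v.restrict p) := by
      by_contra hc
      push_neg at hc
      exact h p (Set.Subset.antisymm hsub hc)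
    obtain ⟨t, hts, htn⟩ := hex
    refine Set.mem_biUnion ((Set.toFinite s).mem_toFinset.2 hts) ?_
    intro q he
    exact htn ⟨q, he⟩
  · intro h q he
    have he' : BInvSet L n (v.restrict q) = s := he
    have hq : v.restrict q ∈ Dset L (n+1) s := by
      intro r
      have hmem : BInv L n ((v.restrict q).restrict r) ∈ BInvSet L n (v.restrict q) :=
        ⟨r, rfl⟩
      rw [he'] at hmem
      exact hmem
    have h3 := h q hq
    obtain ⟨t, htF, hvEt⟩ := Set.mem_iUnion₂.1 h3
    have hts : t ∈ s := (Set.Finite.mem_toFinset _).1 htF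
    have h4 : t ∈ BInvSet L n (v.restrict q) := by
      rw [he']
      exact hts
    obtain ⟨r, hr⟩ := h4
    have hr' : BInv L n ((v.restrict q).restrict r) = t := hr
    exact hvEt r hr'

lemma mu_biInter (mu : Set (Eval L) → Set (Eval M))
    (h2 : ∀ S T : Set (Eval L), InS L S → InS L T → mu (S ∩ T) = mu S ∩ mu T)
    (htop : mu Set.univ = Set.univ)
    {ι : Type _} (A : Finset ι) (F : ι → Set (Eval L)) (hF : ∀ i ∈ A, InS L (F i)) :
    InS L (⋂ i ∈ A, F i) ∧ mu (⋂ i ∈ A, F i) = ⋂ i ∈ A, mu (F i) := by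
  classical
  induction A using Finset.induction_on with
  | empty =>
      have he : (⋂ i ∈ (∅ : Finset ι), F i) = (Set.univ : Set (Eval L)) := by simp
      have he2 : (⋂ i ∈ (∅ : Finset ι), mu (F i)) = (Set.univ : Set (Eval M)) := by simp
      rw [he, he2]
      exact ⟨InS_univ, htop⟩
  | @insert a A ha IH =>
      have hFA : ∀ i ∈ A, InS L (F i) := fun i hi => hF i (Finset.mem_insert_of_mem hi)
      obtain ⟨hI, hEq⟩ := IH hFA
      have ha' : InS L (F a) := hF a (Finset.mem_insert_self a A)
      have hi1 : (⋂ i ∈ insert a A, F i) = F a ∩ ⋂ i ∈ A, F i := by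
        simp
      have hi2 : (⋂ i ∈ insert a A, mu (F i)) = mu (F a) ∩ ⋂ i ∈ A, mu (F i) := by
        simp
      rw [hi1, hi2]
      exact ⟨InS_inter ha' hI, by rw [h2 _ _ ha' hI, hEq]⟩

lemma mu_biUnion (mu : Set (Eval L) → Set (Eval M))
    (h2 : ∀ S T : Set (Eval L), InS L S → InS L T → mu (S ∪ T) = mu S ∪ mu T)
    (hbot : mu ∅ = ∅)
    {ι : Type _} (A : Finset ι) (F : ι → Set (Eval L)) (hF : ∀ i ∈ A, InS L (F i)) :
    InS L (⋃ i ∈ A, F i) ∧ mu (⋃ i ∈ A, F i) = ⋃ i ∈ A, mu (F i) := by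
  classical
  induction A using Finset.induction_on with
  | empty =>
      have he : (⋃ i ∈ (∅ : Finset ι), F i) = (∅ : Set (Eval L)) := by simp
      have he2 : (⋃ i ∈ (∅ : Finset ι), mu (F i)) = (∅ : Set (Eval M)) := by simp
      rw [he, he2]
      exact ⟨InS_empty, hbot⟩
  | @insert a A ha IH =>
      have hFA : ∀ i ∈ A, InS L (F i) := fun i hi => hF i (Finset.mem_insert_of_mem hi)
      obtain ⟨hI, hEq⟩ := IH hFA
      have ha' : InS L (F a) := hF a (Finset.mem_insert_self a A)
      have hi1 : (⋃ i ∈ insert a A, F i) = F a ∪ ⋃ i ∈ A, F i := by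
        simp
      have hi2 : (⋃ i ∈ insert a A, mu (F i)) = mu (F a) ∪ ⋃ i ∈ A, mu (F i) := by
        simp
      rw [hi1, hi2]
      exact ⟨InS_union ha' hI, by rw [h2 _ _ ha' hI, hEq]⟩

lemma DE_main [Finite L]
    (mu nu : Set (Eval L) → Set (Eval M))
    (hmu_inter : ∀ S T : Set (Eval L), InS L S → InS L T → mu (S ∩ T) = mu S ∩ mu T)
    (hmu_union : ∀ S T : Set (Eval L), InS L S → InS L T → mu (S ∪ T) = mu S ∪ mu T)
    (hmu_himp : ∀ S T : Set (Eval L), InS L S → InS L T →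
      mu (himpPt L S T) = himpPt M (mu S) (mu T))
    (hmu_top : mu Set.univ = Set.univ) (hmu_bot : mu ∅ = ∅)
    (hnu_inter : ∀ S T : Set (Eval L), nu (S ∩ T) = nu S ∩ nu T)
    (hnu_union : ∀ S T : Set (Eval L), nu (S ∪ T) = nu S ∪ nu T)
    (hnu_himp : ∀ S T : Set (Eval L), nu (himpPt L S T) = himpPt M (nu S) (nu T))
    (hnu_top : nu Set.univ = Set.univ) (hnu_bot : nu ∅ = ∅)
    (hbase : ∀ d : Set L, IsLowerSet d → mu (iota L d) = nu (iota L d)) :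
    ∀ (n : ℕ) (t : Tn L n),
      mu (Dset L n t) = nu (Dset L n t) ∧ mu (Eset L n t) = nu (Eset L n t) := by
  classical
  intro n
  induction n with
  | zero =>
      intro a
      constructor
      · change mu (iota L {x | x ≤ a}) = nu (iota L {x | x ≤ a})
        exact hbase _ (fun _ _ hxy hx => le_trans hxy hx)
      · have hle : IsLowerSet {x : L | x ≤ a} := fun _ _ hxy hx => le_trans hxy hx
        have hlt : IsLowerSet {x : L | x < a} := fun _ _ hxy hx => lt_of_le_of_lt hxy hx
        change mu (Eset L 0 a) = nu (Eset L 0 a)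
        rw [show Eset L 0 a = himpPt L (iota L {x | x ≤ a}) (iota L {x | x < a}) from
            Eset_zero (L := L) a, hmu_himp _ _ (InS_iota _ hle) (InS_iota _ hlt), hnu_himp,
            hbase _ hle, hbase _ hlt]
  | succ n IH =>
      intro s
      have hD : mu (Dset L (n+1) s) = nu (Dset L (n+1) s) := by
        obtain ⟨hI1, hE1⟩ := mu_biInter mu hmu_inter hmu_top
          (Set.toFinite ((s : Set (Tn L n))ᶜ)).toFinset (fun t => Eset L n t)
          (fun t _ => InS_Eset n t)
        obtain ⟨hI2, hE2⟩ := mu_biInter nu (fun S T _ _ => hnu_inter S T) hnu_top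
          (Set.toFinite ((s : Set (Tn L n))ᶜ)).toFinset (fun t => Eset L n t)
          (fun t _ => InS_Eset n t)
        rw [Dset_succ n s, hE1, hE2]
        exact Set.iInter₂_congr (fun t _ => (IH t).2)
      refine ⟨hD, ?_⟩
      obtain ⟨hU1, hUeq1⟩ := mu_biUnion mu hmu_union hmu_bot
        (Set.toFinite (s : Set (Tn L n))).toFinset (fun t => Eset L n t)
        (fun t _ => InS_Eset n t)
      obtain ⟨hU2, hUeq2⟩ := mu_biUnion nu (fun S T _ _ => hnu_union S T) hnu_bot
        (Set.toFinite (s : Set (Tn L n))).toFinset (fun t => Eset L n t)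
        (fun t _ => InS_Eset n t)
      rw [Eset_succ n s, hmu_himp _ _ (InS_Dset (n+1) s) hU1, hnu_himp, hD, hUeq1, hUeq2,
        Set.iUnion₂_congr (fun t _ => (IH t).2)]

lemma decomp (X : Set (Eval L)) (hsub : IsSub L X) (n : ℕ) (hb : BIndex L n X) :
    X = ⋃ s ∈ BInv L (n+1) '' X, Dset L (n+1) s := by
  apply Set.Subset.antisymm
  · intro u hu
    refine Set.mem_biUnion (Set.mem_image_of_mem _ hu) ?_
    intro q
    exact ⟨q, rfl⟩
  · intro v hv
    simp only [Set.mem_iUnion] at hv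
    obtain ⟨s, hs, hvD⟩ := hv
    obtain ⟨u, huX, rfl⟩ := hs
    have h2 := hvD v.P.root
    rw [BInv_restrict_root] at h2
    obtain ⟨p, hp⟩ := h2
    have hp' : BInv L n (u.restrict p) = BInv L n v := hp
    exact hb _ (hsub u huX p) v ((sim_iff n _ _).2 hp')

lemma nat_aux (G : Set L → Set (Eval M))
    (u : Eval M) (p : u.P.carrier)
    (htrans : ∀ d : Set L, IsLowerSet d → ∀ r : (u.restrict p).P.carrier,
      ((u.restrict p).restrict r ∈ G d ↔ u.restrict r.1 ∈ G d))
    (w : Eval L) (hw : w.P = u.P)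
    (hwd : ∀ d : Set L, IsLowerSet d → ∀ r : u.P.carrier,
      (w.map (cast (congrArg FRP.carrier hw).symm r) ∈ d ↔ u.restrict r ∈ G d))
    (wp : Eval L) (hwp : wp.P = (u.restrict p).P)
    (hwpd : ∀ d : Set L, IsLowerSet d → ∀ r : (u.restrict p).P.carrier,
      (wp.map (cast (congrArg FRP.carrier hwp).symm r) ∈ d ↔ (u.restrict p).restrict r ∈ G d)) :
    wp = w.restrict (cast (congrArg FRP.carrier hw).symm p) := by
  obtain ⟨Pw, mw, mow⟩ := w
  change Pw = u.P at hw
  subst hw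
  obtain ⟨Pwp, mwp, mowp⟩ := wp
  change Pwp = (u.restrict p).P at hwp
  subst hwp
  simp only [cast_eq] at hwd hwpd ⊢
  have hmap : mwp = fun x : (u.restrict p).P.carrier => mw x.1 := by
    funext r
    show mwp r = mw r.1
    apply two_val
    intro d hd
    rw [hwpd d hd r, htrans d hd r, ← hwd d hd r.1]
  subst hmap
  rfl

lemma eval_ext2 {w z : Eval L} (Q : FRP) (hw : w.P = Q) (hz : z.P = Q)
    (h : ∀ q : Q.carrier,
      w.map (cast (congrArg FRP.carrier hw).symm q)
        = z.map (cast (congrArg FRP.carrier hz).symm q)) :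
    w = z := by
  obtain ⟨Pw, mw, mow⟩ := w
  change Pw = Q at hw
  subst hw
  obtain ⟨Pz, mz, moz⟩ := z
  change Pz = Pw at hz
  subst hz
  simp only [cast_eq] at h
  have hm : mw = mz := funext h
  subst hm
  rfl

end AuxDev


/-- with `μ : S(h_L) → S(h_M)` a Heyting morphism and `μ* : h_M → h_L`
the family of evaluations dual to `ev_u ∘ μ ∘ ι_L`:
(1) `μ*` is a natural transformation (commutes with restriction) having a b-index;
(2) `μ = (μ*)⁻¹` on `S(h_L)`;
(3) `f = (f⁻¹)*` for every b-indexed natural transformation `f : h_M → h_L`, i.e. any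
family satisfying the duality property characterizing `(f⁻¹)*` equals `f`.
Together these say that `h_L ↦ S(h_L)`, `f ↦ f⁻¹` is a full and faithful functor
(essentially surjective by freeness of `S(h_L)`), hence an equivalence of categories. -/
theorem duality_theorem (L M : Type) [PartialOrder L] [Finite L]
    [PartialOrder M] [Finite M]
    (mu : Set (Eval L) → Set (Eval M))
    (hmuInS : ∀ X : Set (Eval L), InS L X → InS M (mu X))
    (hmu_inter : ∀ S T : Set (Eval L), InS L S → InS L T → mu (S ∩ T) = mu S ∩ mu T)
    (hmu_union : ∀ S T : Set (Eval L), InS L S → InS L T → mu (S ∪ T) = mu S ∪ mu T)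
    (hmu_himp : ∀ S T : Set (Eval L), InS L S → InS L T →
      mu (himpPt L S T) = himpPt M (mu S) (mu T))
    (hmu_bot : mu (∅ : Set (Eval L)) = ∅)
    (hmu_top : mu (Set.univ : Set (Eval L)) = Set.univ)
    (mustar : Eval M → Eval L)
    (hPdom : ∀ u : Eval M, (mustar u).P = u.P)
    (hdual : ∀ (u : Eval M) (d : Set L), IsLowerSet d → ∀ p : u.P.carrier,
      ((mustar u).map (cast (congrArg FRP.carrier (hPdom u)).symm p) ∈ d ↔
        u.restrict p ∈ mu (iota L d))) :
    -- (1) μ* is a natural transformation with a b-index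
    ((∀ (u : Eval M) (p : u.P.carrier),
        mustar (u.restrict p)
          = (mustar u).restrict (cast (congrArg FRP.carrier (hPdom u)).symm p)) ∧
      (∃ m : ℕ, ∀ (n : ℕ) (u v : Eval M),
        sim M (n+m) u v → sim L n (mustar u) (mustar v))) ∧
    -- (2) μ = (μ*)⁻¹
    (∀ X : Set (Eval L), InS L X → mu X = mustar ⁻¹' X) ∧
    -- (3) f = (f⁻¹)* : any family dual to ev_u ∘ f⁻¹ ∘ ι_L coincides with f
    (∀ (f : Eval M → Eval L)
      (hfdom : ∀ u : Eval M, (f u).P = u.P)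
      (_ : ∀ (u : Eval M) (p : u.P.carrier),
        f (u.restrict p) = (f u).restrict (cast (congrArg FRP.carrier (hfdom u)).symm p))
      (m : ℕ)
      (_ : ∀ (n : ℕ) (u v : Eval M), sim M (n+m) u v → sim L n (f u) (f v))
      (g : Eval M → Eval L)
      (hgdom : ∀ u : Eval M, (g u).P = u.P)
      (_ : ∀ (u : Eval M) (d : Set L), IsLowerSet d → ∀ p : u.P.carrier,
        ((g u).map (cast (congrArg FRP.carrier (hgdom u)).symm p) ∈ d ↔
          u.restrict p ∈ f ⁻¹' (iota L d))),
      g = f) := by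
  classical
  have hidx : ∀ d : Set L, IsLowerSet d → ∃ n, BIndex M n (mu (iota L d)) :=
    fun d hd => (hmuInS _ (InS_iota d hd)).2
  set F : Set L → ℕ := fun d => if h : IsLowerSet d then (hidx d h).choose else 0 with hFdef
  have hFspec : ∀ (d : Set L) (hd : IsLowerSet d), BIndex M (F d) (mu (iota L d)) := by
    intro d hd
    simp only [hFdef, dif_pos hd]
    exact (hidx d hd).choose_spec
  obtain ⟨m, hmbound⟩ : ∃ m : ℕ, ∀ d : Set L, F d ≤ m := by
    obtain ⟨m, hm⟩ := (Set.finite_range F).bddAbove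
    exact ⟨m, fun d => hm (Set.mem_range_self d)⟩
  have hstable : ∀ (d : Set L), IsLowerSet d → ∀ u v : Eval M,
      BInv M (F d) u = BInv M (F d) v → (u ∈ mu (iota L d) ↔ v ∈ mu (iota L d)) := by
    intro d hd u v h
    constructor
    · intro hu; exact hFspec d hd u hu v ((sim_iff _ _ _).2 h)
    · intro hv; exact hFspec d hd v hv u ((sim_iff _ _ _).2 h.symm)
  -- (1a) naturality
  have hnat : ∀ (u : Eval M) (p : u.P.carrier),
      mustar (u.restrict p)
        = (mustar u).restrict (cast (congrArg FRP.carrier (hPdom u)).symm p) := by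
    intro u p
    refine nat_aux (fun d => mu (iota L d)) u p ?_ (mustar u) (hPdom u)
      (fun d hd r => hdual u d hd r) (mustar (u.restrict p)) (hPdom (u.restrict p))
      (fun d hd r => hdual (u.restrict p) d hd r)
    intro d hd r
    exact hstable d hd _ _ (BInv_restrict_restrict (F d) u p r)
  -- root values of `mustar`
  have hrootval : ∀ (u : Eval M) (d : Set L), IsLowerSet d →
      ((mustar u).rootVal ∈ d ↔ u ∈ mu (iota L d)) := by
    intro u d hd
    have h1 := hdual u d hd u.P.root
    rw [cast_root (hPdom u)] at h1
    exact h1.trans (hstable d hd _ _ (BInv_restrict_root (F d) u))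
  -- (1b) b-index for `mustar`
  have hbidx : ∀ (n : ℕ) (u v : Eval M),
      sim M (n+m) u v → sim L n (mustar u) (mustar v) := by
    intro n
    induction n with
    | zero =>
        intro u v hs
        have h0 := (sim_iff (0+m) u v).1 hs
        rw [Nat.zero_add] at h0
        show sim L 0 (mustar u) (mustar v)
        have hr : (mustar u).rootVal = (mustar v).rootVal := by
          apply two_val
          intro d hd
          rw [hrootval u d hd, hrootval v d hd]
          obtain ⟨j, hj⟩ := Nat.exists_eq_add_of_le (hmbound d)
          refine hstable d hd u v (BInv_add_eq j (F d) u v ?_)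
          rw [← hj]
          exact h0
        exact hr
    | succ n IH =>
        intro u v hs
        rw [Nat.add_right_comm n 1 m] at hs
        rw [sim_succ_iff] at hs
        obtain ⟨h1, h2⟩ := hs
        rw [sim_succ_iff]
        constructor
        · intro p'
          obtain ⟨q, hq⟩ := h1 (cast (congrArg FRP.carrier (hPdom u)) p')
          refine ⟨cast (congrArg FRP.carrier (hPdom v)).symm q, ?_⟩
          have h3 := IH _ _ hq
          rw [hnat u _, hnat v q, cast_roundtrip] at h3
          exact h3
        · intro q'
          obtain ⟨p, hp⟩ := h2 (cast (congrArg FRP.carrier (hPdom v)) q')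
          refine ⟨cast (congrArg FRP.carrier (hPdom u)).symm p, ?_⟩
          have h3 := IH _ _ hp
          rw [hnat v _, hnat u p, cast_roundtrip] at h3
          exact h3
  -- (2) mu = preimage under mustar
  have hnu_himp : ∀ S T : Set (Eval L),
      mustar ⁻¹' (himpPt L S T) = himpPt M (mustar ⁻¹' S) (mustar ⁻¹' T) := by
    intro S T
    ext u
    constructor
    · intro h p hp
      have hp' : (mustar u).restrict (cast (congrArg FRP.carrier (hPdom u)).symm p) ∈ S := by
        rw [← hnat u p]
        exact hp
      have h5 := h _ hp'
      show mustar (u.restrict p) ∈ T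
      rw [hnat u p]
      exact h5
    · intro h p' hp'
      have h4 : u.restrict (cast (congrArg FRP.carrier (hPdom u)) p') ∈ mustar ⁻¹' S := by
        show mustar _ ∈ S
        rw [hnat, cast_roundtrip]
        exact hp'
      have h5 := h _ h4
      have h6 : mustar (u.restrict (cast (congrArg FRP.carrier (hPdom u)) p')) ∈ T := h5
      rwa [hnat, cast_roundtrip] at h6
  have hbase : ∀ d : Set L, IsLowerSet d → mu (iota L d) = mustar ⁻¹' (iota L d) := by
    intro d hd
    ext u
    rw [Set.mem_preimage]
    exact (hrootval u d hd).symm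
  have hDE := DE_main mu (fun X => mustar ⁻¹' X) hmu_inter hmu_union hmu_himp hmu_top hmu_bot
    (fun S T => Set.preimage_inter) (fun S T => Set.preimage_union) hnu_himp
    Set.preimage_univ Set.preimage_empty hbase
  have part2 : ∀ X : Set (Eval L), InS L X → mu X = mustar ⁻¹' X := by
    rintro X ⟨hsub, n, hb⟩
    have hdec := decomp X hsub n hb
    have hfin : (BInv L (n+1) '' X).Finite := Set.toFinite _
    have hXeq : X = ⋃ s ∈ hfin.toFinset, Dset L (n+1) s := by
      conv_lhs => rw [hdec]
      ext v
      simp only [Set.mem_iUnion, Set.Finite.mem_toFinset]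
    rw [hXeq]
    obtain ⟨-, hmueq⟩ := mu_biUnion mu hmu_union hmu_bot hfin.toFinset
      (fun s => Dset L (n+1) s) (fun s _ => InS_Dset (n+1) s)
    rw [hmueq, Set.preimage_iUnion₂]
    exact Set.iUnion₂_congr (fun s _ => (hDE (n+1) s).1)
  refine ⟨⟨hnat, ⟨m, hbidx⟩⟩, part2, ?_⟩
  -- (3)
  intro f hfdom hfnat mf hfb g hgdom hgdual
  funext u
  refine eval_ext2 u.P (hgdom u) (hfdom u) ?_
  intro q
  apply two_val
  intro d hd
  have h2 : (u.restrict q ∈ f ⁻¹' iota L d) ↔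
      (f u).map (cast (congrArg FRP.carrier (hfdom u)).symm q) ∈ d := by
    rw [Set.mem_preimage, hfnat u q]
    exact Iff.rfl
  exact (hgdual u d hd q).trans h2
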